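/- Let U ⊆ ℝⁿ be open, k ≥ 1 and l ≥ k+1 integers, and h : U → ℝ a function of class C^k. If g : U → ℝ is continuous and satisfies |g(x)| = |h(x)|^l for every x ∈ U, then g is of class C^k on U. -/

import Mathlib

open Filter Asymptotics Topology

universe u

lemma key_lemma {X : Type u} [NormedAddCommGroup X] [NormedSpace ℝ X] :
    ∀ (k : ℕ) {E : Type u} [NormedAddCommGroup E] [NormedSpace ℝ E]
      (l : ℕ), k + 1 ≤ l → ∀ (U : Set X), IsOpen U →
      ∀ (h : X → ℝ) (ψ : X → E) (F : X → E),
      ContDiffOn ℝ k h U → ContDiffOn ℝ k ψ U → ContinuousOn F U →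
      (∀ x ∈ U, h x = 0 → F x = 0) →
      (∀ x ∈ U, h x ≠ 0 →
        (∀ᶠ y in 𝓝 x, F y = h y ^ l • ψ y) ∨ (∀ᶠ y in 𝓝 x, F y = -(h y ^ l • ψ y))) →
      ContDiffOn ℝ k F U := by
  intro k
  induction k with
  | zero =>
    intro E _ _ l _ U hU h ψ F _ _ hF _ _
    simpa [contDiffOn_zero] using hF
  | succ k IH =>
    intro E _ _ l hl U hU h ψ F hh hψ hF hzero hloc
    obtain ⟨m, rfl⟩ : ∃ m, l = m + 1 := ⟨l - 1, by omega⟩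
    have hm1 : 1 ≤ m := by omega
    have hk1 : (1 : WithTop ℕ∞) ≤ ((k : ℕ) + 1 : ℕ) := by
      exact_mod_cast Nat.succ_le_succ (Nat.zero_le k)
    have hkk1 : ((k : ℕ) : WithTop ℕ∞) ≤ ((k + 1 : ℕ) : WithTop ℕ∞) := by
      exact_mod_cast Nat.le_succ k
    -- differentiability of h and ψ on U
    have hhd : ∀ x ∈ U, DifferentiableAt ℝ h x := fun x hx =>
      ((hh.contDiffAt (hU.mem_nhds hx)).of_le hk1).differentiableAt one_ne_zero
    have hψd : ∀ x ∈ U, DifferentiableAt ℝ ψ x := fun x hx =>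
      ((hψ.contDiffAt (hU.mem_nhds hx)).of_le hk1).differentiableAt one_ne_zero
    -- the new ψ
    set ψ' : X → X →L[ℝ] E := fun x =>
      h x • fderiv ℝ ψ x + ((m : ℝ) + 1) • (fderiv ℝ h x).smulRight (ψ x) with hψ'def
    -- derivative of h^(m+1) • ψ
    have hcomp : ∀ x ∈ U, HasFDerivAt (fun y => h y ^ (m + 1) • ψ y) (h x ^ m • ψ' x) x := by
      intro x hx
      have Hh := (hhd x hx).hasFDerivAt
      have Hψ := (hψd x hx).hasFDerivAt
      have Hpow : HasFDerivAt (fun y => h y ^ (m + 1))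
          ((((m : ℝ) + 1) * h x ^ m) • fderiv ℝ h x) x := by
        have := (hasDerivAt_pow (m + 1) (h x)).comp_hasFDerivAt x Hh
        simpa [Nat.add_sub_cancel, Function.comp_def] using this
      have := Hpow.smul Hψ
      convert this using 1
      · rfl
      ext v
      simp only [hψ'def, ContinuousLinearMap.add_apply, ContinuousLinearMap.smul_apply,
        ContinuousLinearMap.smulRight_apply, ContinuousLinearMap.coe_smul']
      rw [smul_add]
      congr 1
      · rw [smul_smul, pow_succ]
      · rw [smul_comm, smul_smul, smul_smul, smul_eq_mul]
    -- pointwise norm bound for F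
    have hFb : ∀ x ∈ U, ‖F x‖ ≤ |h x| ^ (m + 1) * ‖ψ x‖ := by
      intro x hx
      rcases eq_or_ne (h x) 0 with h0 | h0
      · simp [hzero x hx h0, h0, hm1]
      · rcases hloc x hx h0 with hev | hev
        · rw [hev.self_of_nhds]
          simp [norm_smul, abs_pow, Real.norm_eq_abs, norm_neg]
        · rw [hev.self_of_nhds]
          simp [norm_smul, abs_pow, Real.norm_eq_abs, norm_neg]
    -- derivative of F at zeros of h
    have hFd0 : ∀ z ∈ U, h z = 0 → HasFDerivAt F (0 : X →L[ℝ] E) z := by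
      intro z hz h0
      rw [hasFDerivAt_iff_isLittleO_nhds_zero]
      rw [isLittleO_iff]
      intro c hc
      have hca : ContDiffAt ℝ 1 h z := (hh.contDiffAt (hU.mem_nhds hz)).of_le hk1
      obtain ⟨K, t, ht, hK⟩ := hca.exists_lipschitzOnWith
      have hψc : ContinuousAt ψ z :=
        (hψ.continuousOn.continuousAt (hU.mem_nhds hz))
      set M : ℝ := ‖ψ z‖ + 1 with hM
      have hMev : ∀ᶠ v in 𝓝 (0 : X), ‖ψ (z + v)‖ ≤ M := by
        have : Tendsto (fun v : X => ψ (z + v)) (𝓝 0) (𝓝 (ψ z)) := by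
          have : Tendsto (fun v : X => z + v) (𝓝 0) (𝓝 z) := by
            simpa [Pi.add_def] using (continuous_const.add continuous_id).tendsto (0 : X)
          exact (hψc.tendsto).comp this
        have := (this.norm).eventually (eventually_le_nhds (by simp [hM] : ‖ψ z‖ < M))
        exact this
      have hUev : ∀ᶠ v in 𝓝 (0 : X), z + v ∈ U := by
        have : Tendsto (fun v : X => z + v) (𝓝 0) (𝓝 z) := by
          simpa [Pi.add_def] using (continuous_const.add continuous_id).tendsto (0 : X)
        exact this.eventually (hU.mem_nhds hz)
      have htev : ∀ᶠ v in 𝓝 (0 : X), z + v ∈ t := by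
        have : Tendsto (fun v : X => z + v) (𝓝 0) (𝓝 z) := by
          simpa [Pi.add_def] using (continuous_const.add continuous_id).tendsto (0 : X)
        exact this.eventually ht
      have hzt : z ∈ t := mem_of_mem_nhds ht
      -- eventually |h (z+v)|^m * (K*M) ≤ c
      have hsm : ∀ᶠ v in 𝓝 (0 : X), |h (z + v)| ^ m * ((K : ℝ) * M) ≤ c := by
        have hcont : Tendsto (fun v : X => |h (z + v)| ^ m * ((K : ℝ) * M)) (𝓝 0) (𝓝 0) := by
          have h1 : Tendsto (fun v : X => h (z + v)) (𝓝 0) (𝓝 0) := by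
            have hz' : Tendsto (fun v : X => z + v) (𝓝 0) (𝓝 z) := by
              simpa [Pi.add_def] using (continuous_const.add continuous_id).tendsto (0 : X)
            have := ((hh.continuousOn.continuousAt (hU.mem_nhds hz)).tendsto).comp hz'
            simpa [h0, Function.comp_def] using this
          have h2 : Tendsto (fun v : X => |h (z + v)| ^ m) (𝓝 0) (𝓝 0) := by
            have := (h1.abs).pow m
            simpa [zero_pow (by omega : m ≠ 0)] using this
          simpa using h2.mul_const ((K : ℝ) * M)
        exact hcont.eventually (eventually_le_nhds hc)
      filter_upwards [hMev, hUev, htev, hsm] with v hMv hUv htv hsv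
      have hlip : |h (z + v)| ≤ (K : ℝ) * ‖v‖ := by
        have := hK.dist_le_mul (z + v) htv z hzt
        simpa [Real.dist_eq, dist_eq_norm, h0] using this
      have hFle := hFb (z + v) hUv
      have hM0 : (0 : ℝ) ≤ M := by positivity
      have habs : (0 : ℝ) ≤ |h (z + v)| := abs_nonneg _
      calc ‖F (z + v) - F z - 0‖ = ‖F (z + v)‖ := by simp [hzero z hz h0]
        _ ≤ |h (z + v)| ^ (m + 1) * ‖ψ (z + v)‖ := hFle
        _ = |h (z + v)| ^ m * |h (z + v)| * ‖ψ (z + v)‖ := by rw [pow_succ]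
        _ ≤ |h (z + v)| ^ m * ((K : ℝ) * ‖v‖) * M := by
            apply mul_le_mul
            · exact mul_le_mul_of_nonneg_left hlip (by positivity)
            · exact hMv
            · exact norm_nonneg _
            · positivity
        _ = (|h (z + v)| ^ m * ((K : ℝ) * M)) * ‖v‖ := by ring
        _ ≤ c * ‖v‖ := mul_le_mul_of_nonneg_right hsv (norm_nonneg _)
    -- differentiability of F on U, and local description of fderiv
    have hdiff : ∀ x ∈ U, DifferentiableAt ℝ F x := by
      intro x hx
      rcases eq_or_ne (h x) 0 with h0 | h0
      · exact (hFd0 x hx h0).differentiableAt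
      · rcases hloc x hx h0 with hev | hev
        · exact ((hcomp x hx).congr_of_eventuallyEq hev).differentiableAt
        · exact (((hcomp x hx).neg).congr_of_eventuallyEq hev).differentiableAt
    set G : X → X →L[ℝ] E := fun x => fderiv ℝ F x with hGdef
    have hGzero : ∀ x ∈ U, h x = 0 → G x = 0 := fun x hx h0 => (hFd0 x hx h0).fderiv
    have hGloc : ∀ x ∈ U, h x ≠ 0 →
        (∀ᶠ y in 𝓝 x, G y = h y ^ m • ψ' y) ∨ (∀ᶠ y in 𝓝 x, G y = -(h y ^ m • ψ' y)) := by
      intro x hx h0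
      rcases hloc x hx h0 with hev | hev
      · left
        have hev2 : ∀ᶠ y in 𝓝 x, ∀ᶠ t in 𝓝 y, F t = h t ^ (m + 1) • ψ t :=
          eventually_eventually_nhds.2 hev
        filter_upwards [hev2, hU.eventually_mem hx] with y hy hyU
        have := (hcomp y hyU).congr_of_eventuallyEq hy
        exact this.fderiv
      · right
        have hev2 : ∀ᶠ y in 𝓝 x, ∀ᶠ t in 𝓝 y, F t = -(h t ^ (m + 1) • ψ t) :=
          eventually_eventually_nhds.2 hev
        filter_upwards [hev2, hU.eventually_mem hx] with y hy hyU
        have := ((hcomp y hyU).neg).congr_of_eventuallyEq hy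
        simpa using this.fderiv
    have hGb : ∀ x ∈ U, ‖G x‖ ≤ |h x| ^ m * ‖ψ' x‖ := by
      intro x hx
      rcases eq_or_ne (h x) 0 with h0 | h0
      · simp [hGzero x hx h0, h0, zero_pow (by omega : m ≠ 0)]
      · rcases hGloc x hx h0 with hev | hev
        · rw [hev.self_of_nhds, norm_smul (h x ^ m) (ψ' x), Real.norm_eq_abs, abs_pow]
        · rw [hev.self_of_nhds, norm_neg, norm_smul (h x ^ m) (ψ' x), Real.norm_eq_abs, abs_pow]
    -- smoothness of ψ'
    have hψ'cd : ContDiffOn ℝ k ψ' U := by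
      have h1 : ContDiffOn ℝ k (fderiv ℝ ψ) U := by
        apply hψ.fderiv_of_isOpen hU
        exact_mod_cast le_rfl
      have h2 : ContDiffOn ℝ k (fderiv ℝ h) U := by
        apply hh.fderiv_of_isOpen hU
        exact_mod_cast le_rfl
      have hhk : ContDiffOn ℝ k h U := hh.of_le hkk1
      have hψk : ContDiffOn ℝ k ψ U := hψ.of_le hkk1
      apply ContDiffOn.add
      · exact hhk.smul h1
      · apply ContDiffOn.const_smul
        have hb : ContDiff ℝ (k : ℕ)
            (fun p : (X →L[ℝ] ℝ) × E => (ContinuousLinearMap.smulRightL ℝ X E) p.1 p.2) := by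
          exact ((ContinuousLinearMap.smulRightL ℝ X E).isBoundedBilinearMap.contDiff).of_le
            le_top
        have := hb.comp_contDiffOn (h2.prodMk hψk)
        simpa [ContinuousLinearMap.smulRightL, Function.comp_def] using this
    -- continuity of G
    have hGcont : ContinuousOn G U := by
      intro x hx
      apply ContinuousAt.continuousWithinAt
      rcases eq_or_ne (h x) 0 with h0 | h0
      · have hT : Tendsto G (𝓝 x) (𝓝 0) := by
          apply squeeze_zero_norm' (a := fun y => |h y| ^ m * ‖ψ' y‖)
          · filter_upwards [hU.eventually_mem hx] with y hy using hGb y hy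
          · have h1 : Tendsto (fun y => |h y| ^ m) (𝓝 x) (𝓝 0) := by
              have := ((hh.continuousOn.continuousAt (hU.mem_nhds hx)).abs).pow m
              simpa [h0, zero_pow (by omega : m ≠ 0), Pi.pow_def] using this.tendsto
            have h2 : Tendsto (fun y => ‖ψ' y‖) (𝓝 x) (𝓝 ‖ψ' x‖) :=
              ((hψ'cd.continuousOn.continuousAt (hU.mem_nhds hx)).norm).tendsto
            simpa using h1.mul h2
        rw [ContinuousAt, hGzero x hx h0]
        exact hT
      · have hc : ContinuousAt (fun y => h y ^ m • ψ' y) x := by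
          exact ((hh.continuousOn.continuousAt (hU.mem_nhds hx)).pow m).smul
            (hψ'cd.continuousOn.continuousAt (hU.mem_nhds hx))
        rcases hGloc x hx h0 with hev | hev
        · exact hc.congr (hev.mono fun y hy => hy.symm) |>.congr (Filter.EventuallyEq.rfl)
        · exact (hc.neg.congr (hev.mono fun y hy => hy.symm)).congr (Filter.EventuallyEq.rfl)
    -- conclude by induction
    have hGcd : ContDiffOn ℝ k G U :=
      IH m (by omega) U hU h ψ' G (hh.of_le hkk1) hψ'cd hGcont hGzero hGloc
    have : ((k + 1 : ℕ) : WithTop ℕ∞) = ((k : ℕ) : WithTop ℕ∞) + 1 := by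
      push_cast; ring
    rw [this, contDiffOn_succ_iff_fderiv_of_isOpen hU]
    refine ⟨fun x hx => (hdiff x hx).differentiableWithinAt, ?_, hGcd⟩
    intro hcontra
    exact absurd hcontra (by simp)

theorem stmt_10 (n k l : ℕ) (hk : 1 ≤ k) (hl : k + 1 ≤ l)
    (U : Set (Fin n → ℝ)) (hU : IsOpen U)
    (h g : (Fin n → ℝ) → ℝ)
    (hh : ContDiffOn ℝ k h U)
    (hg : ContinuousOn g U)
    (habs : ∀ x ∈ U, |g x| = |h x| ^ l) :
    ContDiffOn ℝ k g U := by
  have key := key_lemma k l hl U hU h (fun _ => (1 : ℝ)) g hh contDiffOn_const hg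
  apply key
  · intro x hx h0
    have := habs x hx
    rw [h0] at this
    simp [zero_pow (by omega : l ≠ 0)] at this
    simpa using this
  · intro x hx h0
    have hgx : g x ≠ 0 := by
      have hax := habs x hx
      intro hg0
      rw [hg0, abs_zero] at hax
      have : |h x| = 0 := pow_eq_zero_iff (by omega : l ≠ 0) |>.mp hax.symm
      exact h0 (abs_eq_zero.mp this)
    have habs' : ∀ y ∈ U, |g y| = |h y ^ l| := by
      intro y hy; rw [habs y hy, abs_pow]
    have hgc : ContinuousAt (fun y => g y * g x) x :=
      (hg.continuousAt (hU.mem_nhds hx)).mul continuousAt_const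
    have hhc : ContinuousAt (fun y => h y * h x) x :=
      (hh.continuousOn.continuousAt (hU.mem_nhds hx)).mul continuousAt_const
    have h1 : ∀ᶠ y in 𝓝 x, 0 < g y * g x :=
      hgc (Ioi_mem_nhds (mul_self_pos.mpr hgx))
    have h2 : ∀ᶠ y in 𝓝 x, 0 < h y * h x :=
      hhc (Ioi_mem_nhds (mul_self_pos.mpr h0))
    have h3 : ∀ᶠ y in 𝓝 x, y ∈ U := hU.eventually_mem hx
    have hsx : g x = h x ^ l ∨ g x = -(h x ^ l) := abs_eq_abs.mp (habs' x hx)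
    rcases hsx with hsx | hsx
    · left
      filter_upwards [h1, h2, h3] with y hy1 hy2 hy3
      have hsy : g y = h y ^ l ∨ g y = -(h y ^ l) := abs_eq_abs.mp (habs' y hy3)
      have hpow : 0 < (h y * h x) ^ l := pow_pos hy2 l
      rw [mul_pow] at hpow
      rcases hsy with hsy | hsy
      · simp [hsy]
      · exfalso
        rw [hsy, hsx] at hy1
        nlinarith
    · right
      filter_upwards [h1, h2, h3] with y hy1 hy2 hy3
      have hsy : g y = h y ^ l ∨ g y = -(h y ^ l) := abs_eq_abs.mp (habs' y hy3)
      have hpow : 0 < (h y * h x) ^ l := pow_pos hy2 l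
      rw [mul_pow] at hpow
      rcases hsy with hsy | hsy
      · exfalso
        rw [hsy, hsx] at hy1
        nlinarith
      · simp [hsy]
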